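/- arXiv:1002.1943 — 2 statements merged into one kernel-verified Lean document; each statement's English description precedes it below -/
import Mathlib

section
/- Let G be a graph whose vertex set V is countable, and suppose each vertex x has finite degree D(x). Fix a vertex x and define M_out(x) = 1 if there exists an edge e incident to x whose removal leaves x in a finite connected component, and M_out(x) = 0 otherwise; define M_in(x) to be the number of neighbors y of x such that removing the edge {x,y} leaves y in a finite component. If the component of x is infinite, then D(x) - 2 ≥ M_in(x) - M_out(x). -/
open SimpleGraph

private lemma reach_step {V : Type*} (H : SimpleGraph V) {x z : V}
    (h : H.Reachable x z) (hz : z ≠ x) :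
    ∃ y, H.Adj x y ∧ (H.deleteEdges {s(x, y)}).Reachable y z := by
  classical
  obtain ⟨p⟩ := h
  obtain ⟨q, hq⟩ := p.toPath
  cases q with
  | nil => exact absurd rfl hz.symm
  | @cons _ y _ hxy t =>
    rw [SimpleGraph.Walk.cons_isPath_iff] at hq
    refine ⟨y, hxy, ⟨t.transfer _ ?_⟩⟩
    intro e he
    rw [SimpleGraph.edgeSet_deleteEdges]
    refine ⟨t.edges_subset_edgeSet he, ?_⟩
    simp only [Set.mem_singleton_iff]
    rintro rfl
    exact hq.2 (SimpleGraph.Walk.fst_mem_support_of_mem_edges t he)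

private lemma supp_mono {V : Type*} {H1 H2 : SimpleGraph V} (hle : H1 ≤ H2) (y : V) :
    (H1.connectedComponentMk y).supp ⊆ (H2.connectedComponentMk y).supp := by
  intro z hz
  rw [SimpleGraph.ConnectedComponent.mem_supp_iff, SimpleGraph.ConnectedComponent.eq] at hz ⊢
  exact hz.mono hle

private lemma finite_supp_of_all {V : Type*} (H : SimpleGraph V) (x : V)
    (hfin : (H.neighborSet x).Finite)
    (h : ∀ y, H.Adj x y → ((H.deleteEdges {s(x, y)}).connectedComponentMk y).supp.Finite) :
    ((H.connectedComponentMk x).supp).Finite := by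
  have hsub : (H.connectedComponentMk x).supp ⊆
      insert x (⋃ y ∈ H.neighborSet x,
        ((H.deleteEdges {s(x, y)}).connectedComponentMk y).supp) := by
    intro z hz
    rw [SimpleGraph.ConnectedComponent.mem_supp_iff, SimpleGraph.ConnectedComponent.eq] at hz
    by_cases hzx : z = x
    · exact Set.mem_insert_iff.2 (Or.inl hzx)
    · obtain ⟨y, hy, hr⟩ := reach_step H hz.symm hzx
      refine Set.mem_insert_iff.2 (Or.inr ?_)
      refine Set.mem_biUnion hy ?_
      rw [SimpleGraph.ConnectedComponent.mem_supp_iff, SimpleGraph.ConnectedComponent.eq]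
      exact hr.symm

  exact ((hfin.biUnion (fun y hy => h y hy)).insert x).subset hsub

open Classical in
/-- If the component of a vertex `x` in a locally finite graph is infinite, then
`D(x) - 2 ≥ M_in(x) - M_out(x)`, where `M_out(x)` is `1` if some edge incident to `x`
leaves `x` in a finite component upon removal (and `0` otherwise), and `M_in(x)` counts
the neighbours `y` of `x` left in a finite component upon removal of the edge `{x,y}`. -/
theorem mass_bound_of_infinite_component {V : Type*} [Countable V]
    (G : SimpleGraph V) [G.LocallyFinite] (x : V)
    (hx : (G.connectedComponentMk x).supp.Infinite)
    (Mout : ℕ)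
    (hMout : Mout = if ∃ y, G.Adj x y ∧
        (((G.deleteEdges {s(x, y)}).connectedComponentMk x).supp.Finite) then 1 else 0)
    (Min : ℕ)
    (hMin : Min = {y | G.Adj x y ∧
        (((G.deleteEdges {s(x, y)}).connectedComponentMk y).supp.Finite)}.ncard) :
    (Min : ℤ) - Mout ≤ (G.degree x : ℤ) - 2 := by
  set M : Set V := {y | G.Adj x y ∧
      (((G.deleteEdges {s(x, y)}).connectedComponentMk y).supp.Finite)} with hM
  have hNfin : (G.neighborSet x).Finite := (G.neighborSet x).toFinite
  have hMN : M ⊆ G.neighborSet x := fun y hy => hy.1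
  have hMfin : M.Finite := hNfin.subset hMN
  have hNcard : (G.neighborSet x).ncard = G.degree x := by
    rw [Set.ncard_eq_toFinset_card']
    rfl
  -- there is a neighbor not in M
  have hy0 : ∃ y0, G.Adj x y0 ∧ y0 ∉ M := by
    by_contra hc
    push_neg at hc
    refine hx (finite_supp_of_all G x hNfin ?_)
    intro y hy
    exact (hc y hy).2
  obtain ⟨y0, hy0adj, hy0M⟩ := hy0
  by_cases hcond : ∃ y, G.Adj x y ∧
      (((G.deleteEdges {s(x, y)}).connectedComponentMk x).supp.Finite)
  · -- Mout = 1, need Min + 1 ≤ degree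
    rw [hMout, if_pos hcond]
    have h1 : M.ncard + 1 ≤ G.degree x := by
      have h := Set.ncard_le_ncard (Set.insert_subset ((SimpleGraph.mem_neighborSet G x y0).2 hy0adj) hMN) hNfin
      rwa [Set.ncard_insert_of_notMem hy0M hMfin, hNcard] at h
    rw [hMin]
    push_cast
    omega
  · -- Mout = 0
    rw [hMout, if_neg hcond]
    push_neg at hcond
    -- component of x in G \ xy0 is infinite
    set H := G.deleteEdges {s(x, y0)} with hH
    have hHinf : ((H.connectedComponentMk x).supp).Infinite := hcond y0 hy0adj
    have hHNfin : (H.neighborSet x).Finite := by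
      refine hNfin.subset ?_
      intro z hz
      exact ((SimpleGraph.deleteEdges_adj).1 hz).1
    -- get a second neighbor y1
    have hy1 : ∃ y1, H.Adj x y1 ∧
        ¬ ((H.deleteEdges {s(x, y1)}).connectedComponentMk y1).supp.Finite := by
      by_contra hc
      push_neg at hc
      exact hHinf (finite_supp_of_all H x hHNfin hc)
    obtain ⟨y1, hy1adj, hy1inf⟩ := hy1
    have hy1G : G.Adj x y1 := ((SimpleGraph.deleteEdges_adj).1 hy1adj).1
    have hy1ne : y1 ≠ y0 := by
      rintro rfl
      rw [hH, SimpleGraph.deleteEdges_adj] at hy1adj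
      exact hy1adj.2 rfl
    have hy1M : y1 ∉ M := by
      intro hmem
      refine hy1inf (hmem.2.subset (supp_mono ?_ y1))
      intro a b hab
      exact ⟨((SimpleGraph.deleteEdges_adj).1 hab.1).1, hab.2⟩
    have h2 : M.ncard + 2 ≤ G.degree x := by
      have hsub2 : insert y0 (insert y1 M) ⊆ G.neighborSet x :=
        Set.insert_subset ((SimpleGraph.mem_neighborSet G x y0).2 hy0adj)
          (Set.insert_subset ((SimpleGraph.mem_neighborSet G x y1).2 hy1G) hMN)
      have hcard : (insert y0 (insert y1 M)).ncard = M.ncard + 2 := by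
        rw [Set.ncard_insert_of_notMem (by simp [hy1ne.symm, hy0M]) ((hMfin.insert y1)),
          Set.ncard_insert_of_notMem hy1M hMfin]
      have h := Set.ncard_le_ncard hsub2 hNfin
      rw [hcard, hNcard] at h
      omega
    rw [hMin]
    push_cast
    omega
end

section
/- Let G' be a directed graph on a nonempty set of points in R^d in which every vertex has out-degree exactly 1, each vertex points to its nearest 'compatible' vertex, and suppose the underlying point set is non-equidistant. If G' contains no directed cycle of length 2, then G' contains no directed cycle of any length ≥ 2; consequently every weakly connected component of G' is infinite, and following outgoing edges from any vertex yields an infinite sequence x_0, x_1, x_2, ... with |x_{i+1} − x_i| strictly decreasing (a descending chain). -/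
/-- A set `U ⊆ ℝ^d` is non-equidistant if no two distinct pairs of its points realize the
same distance. -/
def NonEquidistant {d : ℕ} (U : Set (EuclideanSpace ℝ (Fin d))) : Prop :=
  (∀ x y u v : U, x ≠ y → u ≠ v → (x ≠ u ∨ y ≠ v) → (x ≠ v ∨ y ≠ u) →
    dist (x : EuclideanSpace ℝ (Fin d)) y ≠ dist (u : EuclideanSpace ℝ (Fin d)) v) ∧
  (∀ x y v : U, x ≠ y → y ≠ v → x ≠ v →
    dist (x : EuclideanSpace ℝ (Fin d)) y ≠ dist (y : EuclideanSpace ℝ (Fin d)) v)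

/-- In the "nearest compatible point" functional graph on a non-equidistant point set,
if there is no directed cycle of length 2, then there is no directed cycle of any length
`≥ 2`; consequently every orbit is infinite (so every weakly connected component is
infinite), and following outgoing edges from any vertex yields a descending chain, i.e.
the successive edge lengths strictly decrease. -/
theorem nearest_neighbour_graph_descending_chain {d : ℕ}
    (U : Set (EuclideanSpace ℝ (Fin d))) (hU : U.Nonempty)
    (hne : NonEquidistant U)
    (compat : U → U → Prop) (hsymm : ∀ x y, compat x y → compat y x)
    (f : U → U)
    (hfne : ∀ x, f x ≠ x)
    (hfcompat : ∀ x, compat x (f x))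
    (hnearest : ∀ x y : U, compat x y → y ≠ x →
      dist (x : EuclideanSpace ℝ (Fin d)) (f x) ≤ dist (x : EuclideanSpace ℝ (Fin d)) y)
    (hno2 : ∀ x, f (f x) ≠ x) :
    (∀ x : U, ∀ n : ℕ, 1 ≤ n → f^[n] x ≠ x) ∧
    (∀ x : U, (Set.range fun n : ℕ => f^[n] x).Infinite) ∧
    (∀ x : U, StrictAnti fun n : ℕ =>
      dist ((f^[n] x : U) : EuclideanSpace ℝ (Fin d)) (f^[n + 1] x : U)) := by
  have key : ∀ y : U, dist ((f y : U) : EuclideanSpace ℝ (Fin d)) (f (f y)) <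
      dist (y : EuclideanSpace ℝ (Fin d)) (f y) := by
    intro y
    have h1 : dist ((f y : U) : EuclideanSpace ℝ (Fin d)) (f (f y)) ≤
        dist ((f y : U) : EuclideanSpace ℝ (Fin d)) y :=
      hnearest (f y) y (hsymm y (f y) (hfcompat y)) (Ne.symm (hfne y))
    rw [dist_comm ((f y : U) : EuclideanSpace ℝ (Fin d)) (y : EuclideanSpace ℝ (Fin d))] at h1
    have h2 := hne.2 y (f y) (f (f y)) (Ne.symm (hfne y)) (Ne.symm (hfne (f y)))
      (Ne.symm (hno2 y))
    exact lt_of_le_of_ne h1 (Ne.symm h2)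
  have hanti : ∀ x : U, StrictAnti fun n : ℕ =>
      dist ((f^[n] x : U) : EuclideanSpace ℝ (Fin d)) (f^[n + 1] x : U) := by
    intro x
    apply strictAnti_nat_of_succ_lt
    intro n
    simp only [Function.iterate_succ_apply']
    exact key (f^[n] x)
  have hnocyc : ∀ x : U, ∀ n : ℕ, 1 ≤ n → f^[n] x ≠ x := by
    intro x n hn hcyc
    have h := hanti x (show 0 < n from hn)
    simp only at h
    rw [hcyc] at h
    simp only [Function.iterate_succ_apply', hcyc, Function.iterate_zero_apply,
      Function.iterate_one] at h
    exact lt_irrefl _ h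
  refine ⟨hnocyc, ?_, hanti⟩
  intro x
  apply Set.infinite_range_of_injective
  intro m n hmn
  simp only at hmn
  by_contra hne'
  rcases Nat.lt_or_ge m n with h | h
  · have : f^[n - m] (f^[m] x) = f^[m] x := by
      rw [← Function.iterate_add_apply, Nat.sub_add_cancel (le_of_lt h), hmn]
    exact hnocyc (f^[m] x) (n - m) (Nat.le_sub_of_add_le (by omega)) this
  · have hlt : n < m := lt_of_le_of_ne h (Ne.symm hne')
    have : f^[m - n] (f^[n] x) = f^[n] x := by
      rw [← Function.iterate_add_apply, Nat.sub_add_cancel (le_of_lt hlt), ← hmn]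
    exact hnocyc (f^[n] x) (m - n) (Nat.le_sub_of_add_le (by omega)) this
end
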